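/- Let G be a real symmetric 4×4 matrix in emission form, and let A = √(G₂₃G₁₄), B = √(G₁₃G₂₄), C = √(G₁₂G₃₄). Then there exists an invertible real 4×4 matrix P with Pᵀ G P = diag(1, −1, −1, −1) (i.e., G is congruent to the Lorentzian metric of signature (+,−,−,−)) if and only if A < B + C, B < A + C and C < A + B. -/

import Mathlib

open Matrix

lemma pos_head' {x y z : ℝ} (hxy : 0 < x + y) (hzx : 0 < z + x) (h : 0 < x * (y * z)) :
    0 < x := by
  by_contra hx
  push_neg at hx
  have hy : 0 < y := by linarith
  have hz : 0 < z := by linarith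
  nlinarith [mul_pos hy hz]

lemma tri_of_prod {x y z : ℝ} (hxy : 0 < x + y) (hyz : 0 < y + z) (hzx : 0 < z + x)
    (h : 0 < x * (y * z)) : 0 < x ∧ 0 < y ∧ 0 < z :=
  ⟨pos_head' hxy hzx h,
   pos_head' (x := y) (y := z) (z := x) hyz (by linarith) (by nlinarith),
   pos_head' (x := z) (y := x) (z := y) hzx (by linarith) (by nlinarith)⟩

lemma neg_of_max {p q r s : ℝ} (hsum : p + q + r + s = 0) (hprod : p * q * r * s < 0)
    (hbr : -r ≤ p) (hbs : -s ≤ p) (hp : 0 < p) : q < 0 := by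
  by_contra hq
  push_neg at hq
  rcases lt_or_ge r 0 with hr | hr
  · have hs : s ≤ 0 := by linarith
    have hrs : 0 ≤ r * s := by nlinarith [mul_nonneg (neg_nonneg.2 hr.le) (neg_nonneg.2 hs)]
    nlinarith [mul_nonneg (mul_nonneg hp.le hq) hrs]
  · have hq0 : q = 0 := le_antisymm (by linarith) hq
    rw [hq0] at hprod
    nlinarith

lemma classify_eigs {p q r s : ℝ} (hsum : p + q + r + s = 0) (hprod : p * q * r * s < 0)
    (hq : q ≤ p) (hr : r ≤ p) (hs : s ≤ p)
    (hbq : -q ≤ p) (hbr : -r ≤ p) (hbs : -s ≤ p) :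
    0 < p ∧ q < 0 ∧ r < 0 ∧ s < 0 := by
  have hp0 : 0 ≤ p := by linarith
  have hp : 0 < p := by
    rcases hp0.lt_or_eq with h | h
    · exact h
    · exfalso
      have hq0 : q = 0 := le_antisymm (by linarith) (by linarith)
      rw [hq0] at hprod; nlinarith
  refine ⟨hp, neg_of_max hsum hprod hbr hbs hp, ?_, ?_⟩
  · exact neg_of_max (by linarith : p + r + q + s = 0) (by nlinarith) hbq hbs hp
  · exact neg_of_max (by linarith : p + s + q + r = 0) (by nlinarith) hbq hbr hp


lemma emission_exists_P (G : Matrix (Fin 4) (Fin 4) ℝ) (hsymm : G.IsSymm)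
    (hdiag : ∀ i, G i i = 0) (hpos : ∀ i j, i ≠ j → 0 < G i j) (hdet : G.det < 0) :
    ∃ P : Matrix (Fin 4) (Fin 4) ℝ, IsUnit P ∧
      P.transpose * G * P = Matrix.diagonal ![1, -1, -1, -1] := by
  have hGnn : ∀ i j, 0 ≤ G i j := by
    intro i j
    rcases eq_or_ne i j with rfl | h
    · exact (hdiag i).ge
    · exact (hpos i j h).le
  have hH : G.IsHermitian := by
    rw [Matrix.IsHermitian, Matrix.conjTranspose_eq_transpose_of_trivial]; exact hsymm
  set μ := hH.eigenvalues with hμ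
  set U : Matrix (Fin 4) (Fin 4) ℝ := (hH.eigenvectorUnitary : Matrix (Fin 4) (Fin 4) ℝ) with hU
  have hstarU : star U = Uᵀ := by
    rw [Matrix.star_eq_conjTranspose, Matrix.conjTranspose_eq_transpose_of_trivial]
  have hcoe : (RCLike.ofReal ∘ μ) = μ := by rw [RCLike.ofReal_real_eq_id]; rfl
  have hUdiag : Uᵀ * G * U = Matrix.diagonal μ := by
    have := hH.spectral_theorem
    rw [Unitary.conjStarAlgAut_apply, hstarU, hcoe] at this
    have h1' := (Matrix.mem_unitaryGroup_iff').mp (hH.eigenvectorUnitary).2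
    rw [hstarU] at h1'
    rw [this, show Uᵀ * (U * diagonal μ * Uᵀ) * U = (Uᵀ * U) * diagonal μ * (Uᵀ * U) by
      simp only [Matrix.mul_assoc], h1', Matrix.one_mul, Matrix.mul_one]
  have hU1 : U * Uᵀ = 1 := by
    have := (Matrix.mem_unitaryGroup_iff).mp (hH.eigenvectorUnitary).2
    rwa [hstarU] at this
  have hU1' : Uᵀ * U = 1 := by
    have := (Matrix.mem_unitaryGroup_iff').mp (hH.eigenvectorUnitary).2
    rwa [hstarU] at this
  have hspec : G = U * Matrix.diagonal μ * Uᵀ := by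
    have := hH.spectral_theorem
    rwa [Unitary.conjStarAlgAut_apply, hstarU, hcoe] at this
  have hprod : μ 0 * μ 1 * μ 2 * μ 3 < 0 := by
    have := hH.det_eq_prod_eigenvalues
    rw [Fin.prod_univ_four] at this
    rw [this] at hdet
    convert hdet using 1
    simp [hμ]
  have hsum : μ 0 + μ 1 + μ 2 + μ 3 = 0 := by
    have h1 : G.trace = 0 := by
      rw [Matrix.trace]
      simp [Matrix.diag, hdiag, Fin.sum_univ_four]
    have h2 : G.trace = μ 0 + μ 1 + μ 2 + μ 3 := by
      conv_lhs => rw [hspec]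
      rw [Matrix.trace_mul_cycle, hU1', Matrix.one_mul, Matrix.trace_diagonal,
        Fin.sum_univ_four]
    rw [h1] at h2
    linarith
  obtain ⟨m, -, hm⟩ := Finset.exists_max_image Finset.univ μ ⟨0, Finset.mem_univ 0⟩
  have hmx : ∀ i, μ i ≤ μ m := fun i => hm i (Finset.mem_univ i)
  -- Rayleigh upper bound
  have hray : ∀ w : Fin 4 → ℝ, w ⬝ᵥ (G *ᵥ w) ≤ μ m * (w ⬝ᵥ w) := by
    intro w
    set y := Uᵀ *ᵥ w with hy
    have hGw : G *ᵥ w = U *ᵥ (Matrix.diagonal μ *ᵥ y) := by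
      rw [hy, Matrix.mulVec_mulVec, Matrix.mulVec_mulVec, ← hspec]
    have h1 : w ⬝ᵥ (G *ᵥ w) = y ⬝ᵥ (Matrix.diagonal μ *ᵥ y) := by
      rw [hGw, Matrix.dotProduct_mulVec w U _, hy, Matrix.mulVec_transpose]
    have h2 : w ⬝ᵥ w = y ⬝ᵥ y := by
      have : y ⬝ᵥ y = w ⬝ᵥ (U *ᵥ y) := by
        rw [hy, Matrix.mulVec_transpose, ← Matrix.dotProduct_mulVec]
      rw [this, hy, Matrix.mulVec_mulVec, hU1, Matrix.one_mulVec]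
    rw [h1, h2]
    have e1 : y ⬝ᵥ (Matrix.diagonal μ *ᵥ y) = ∑ i, μ i * y i ^ 2 := by
      simp [dotProduct, Matrix.mulVec_diagonal]
      exact Finset.sum_congr rfl fun i _ => by ring
    have e2 : μ m * (y ⬝ᵥ y) = ∑ i, μ m * y i ^ 2 := by
      simp [dotProduct, Finset.mul_sum]
      exact Finset.sum_congr rfl fun i _ => by ring
    rw [e1, e2]
    exact Finset.sum_le_sum fun i _ => mul_le_mul_of_nonneg_right (hmx i) (sq_nonneg _)
  -- lower bound via nonnegativity of entries
  have hbnd : ∀ i, -μ i ≤ μ m := by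
    intro i
    set v : Fin 4 → ℝ := ⇑(hH.eigenvectorBasis i) with hv
    have hGv : G *ᵥ v = μ i • v := hH.mulVec_eigenvectorBasis i
    have hnorm : v ⬝ᵥ v = 1 := by
      have h1 : ‖hH.eigenvectorBasis i‖ = 1 := hH.eigenvectorBasis.orthonormal.1 i
      have h2 : ‖hH.eigenvectorBasis i‖ = Real.sqrt (∑ j, v j ^ 2) := by
        rw [EuclideanSpace.norm_eq]
        congr 1
        exact Finset.sum_congr rfl fun j _ => by rw [Real.norm_eq_abs, sq_abs]
      rw [h2] at h1
      have h3 := Real.sqrt_eq_one.mp h1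
      simpa [dotProduct, ← sq] using h3
    have hvGv : v ⬝ᵥ (G *ᵥ v) = μ i := by
      rw [hGv, dotProduct_smul, smul_eq_mul, hnorm, mul_one]
    set w : Fin 4 → ℝ := fun j => |v j| with hw
    have hww : w ⬝ᵥ w = 1 := by
      have : ∀ j, w j * w j = v j * v j := fun j => abs_mul_abs_self (v j)
      simpa [dotProduct, this] using hnorm
    have hkey : -(v ⬝ᵥ (G *ᵥ v)) ≤ w ⬝ᵥ (G *ᵥ w) := by
      have e1 : v ⬝ᵥ (G *ᵥ v) = ∑ j, ∑ k, v j * (G j k * v k) := by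
        simp [dotProduct, Matrix.mulVec, dotProduct, Finset.mul_sum]
      have e2 : w ⬝ᵥ (G *ᵥ w) = ∑ j, ∑ k, w j * (G j k * w k) := by
        simp [dotProduct, Matrix.mulVec, dotProduct, Finset.mul_sum]
      rw [e1, e2, ← Finset.sum_neg_distrib]
      refine Finset.sum_le_sum fun j _ => ?_
      rw [← Finset.sum_neg_distrib]
      refine Finset.sum_le_sum fun k _ => ?_
      have habs : |v j * (G j k * v k)| = w j * (G j k * w k) := by
        rw [abs_mul, abs_mul, abs_of_nonneg (hGnn j k)]
      calc -(v j * (G j k * v k)) ≤ |v j * (G j k * v k)| := neg_le_abs _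
        _ = w j * (G j k * w k) := habs
    have h4 := hray w
    rw [hww, hvGv] at *
    rw [hww] at h4
    linarith [hkey, h4]
  -- classification: one positive eigenvalue, three negative
  have hclass : ∃ k : Fin 4, 0 < μ k ∧ ∀ i, i ≠ k → μ i < 0 := by
    have r01 : μ 1 * μ 0 * μ 2 * μ 3 < 0 := by nlinarith [hprod]
    have r2 : μ 2 * μ 0 * μ 1 * μ 3 < 0 := by nlinarith [hprod]
    have r3 : μ 3 * μ 0 * μ 1 * μ 2 < 0 := by nlinarith [hprod]
    fin_cases m
    · obtain ⟨h1, h2, h3, h4⟩ := classify_eigs hsum hprod (hmx 1) (hmx 2) (hmx 3)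
        (hbnd 1) (hbnd 2) (hbnd 3)
      exact ⟨0, h1, fun i hi => by fin_cases i <;> first | exact absurd rfl hi | exact h2 | exact h3 | exact h4⟩
    · obtain ⟨h1, h2, h3, h4⟩ := classify_eigs (by linarith : μ 1 + μ 0 + μ 2 + μ 3 = 0) r01
        (hmx 0) (hmx 2) (hmx 3) (hbnd 0) (hbnd 2) (hbnd 3)
      exact ⟨1, h1, fun i hi => by fin_cases i <;> first | exact absurd rfl hi | exact h2 | exact h3 | exact h4⟩
    · obtain ⟨h1, h2, h3, h4⟩ := classify_eigs (by linarith : μ 2 + μ 0 + μ 1 + μ 3 = 0) r2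
        (hmx 0) (hmx 1) (hmx 3) (hbnd 0) (hbnd 1) (hbnd 3)
      exact ⟨2, h1, fun i hi => by fin_cases i <;> first | exact absurd rfl hi | exact h2 | exact h3 | exact h4⟩
    · obtain ⟨h1, h2, h3, h4⟩ := classify_eigs (by linarith : μ 3 + μ 0 + μ 1 + μ 2 = 0) r3
        (hmx 0) (hmx 1) (hmx 2) (hbnd 0) (hbnd 1) (hbnd 2)
      exact ⟨3, h1, fun i hi => by fin_cases i <;> first | exact absurd rfl hi | exact h2 | exact h3 | exact h4⟩
  obtain ⟨k, hkpos, hkneg⟩ := hclass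
  set σ : Equiv.Perm (Fin 4) := Equiv.swap 0 k with hσ
  have hσ0 : σ 0 = k := Equiv.swap_apply_left 0 k
  have hμσ : ∀ i, μ (σ i) ≠ 0 := by
    intro i
    rcases eq_or_ne i 0 with rfl | hi
    · rw [hσ0]; exact hkpos.ne'
    · have : σ i ≠ k := by
        rw [← hσ0]; exact fun h => hi (σ.injective h)
      exact (hkneg _ this).ne
  set s : Fin 4 → ℝ := fun j => Real.sqrt |μ (σ j)| with hs
  have hspos : ∀ j, 0 < s j := fun j => Real.sqrt_pos.mpr (abs_pos.mpr (hμσ j))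
  set c : Fin 4 → ℝ := fun j => (s j)⁻¹ with hc
  set Q : Matrix (Fin 4) (Fin 4) ℝ := Matrix.of (fun p j => if p = σ j then c j else 0) with hQ
  set R : Matrix (Fin 4) (Fin 4) ℝ := Matrix.of (fun j p => if p = σ j then s j else 0) with hR
  have hRQ : R * Q = 1 := by
    ext j i
    rw [Matrix.mul_apply, Matrix.one_apply]
    simp only [hR, hQ, Matrix.of_apply, ite_mul, zero_mul, mul_ite, mul_zero]
    rw [Finset.sum_ite_eq' Finset.univ (σ i) (fun p => if p = σ j then s j * c i else 0)]
    simp only [Finset.mem_univ, if_true]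
    rcases eq_or_ne j i with rfl | hne
    · simp [mul_inv_cancel₀ (hspos j).ne']
      exact mul_inv_cancel₀ (hspos j).ne'
    · have h' : σ i ≠ σ j := fun h => hne (σ.injective h).symm
      simp [h', hne]
  have hQunit : IsUnit Q := by
    have := invertibleOfLeftInverse Q R hRQ
    exact isUnit_of_invertible Q
  have hQDQ : Qᵀ * Matrix.diagonal μ * Q = Matrix.diagonal ![1, -1, -1, -1] := by
    ext i j
    rw [Matrix.mul_assoc, Matrix.mul_apply]
    have hDQ : ∀ p j', (Matrix.diagonal μ * Q) p j' = if p = σ j' then μ p * c j' else 0 := by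
      intro p j'
      rw [Matrix.diagonal_mul]
      simp only [hQ, Matrix.of_apply, mul_ite, mul_zero]
    simp only [hDQ]
    simp only [Matrix.transpose_apply, hQ, Matrix.of_apply, hDQ, ite_mul, zero_mul,
      mul_ite, mul_zero]
    rw [Finset.sum_ite_eq' Finset.univ (σ j) (fun p => if p = σ i then c i * (μ p * c j) else 0)]
    simp only [Finset.mem_univ, if_true]
    rcases eq_or_ne i j with rfl | hne
    · rw [if_pos rfl, Matrix.diagonal_apply_eq]
      have hss : s i * s i = |μ (σ i)| := Real.mul_self_sqrt (abs_nonneg _)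
      have hval : c i * (μ (σ i) * c i) = μ (σ i) / |μ (σ i)| := by
        rw [hc, ← hss]
        have hs0 := (hspos i).ne'
        field_simp
      rw [hval]
      rcases eq_or_ne i 0 with rfl | hi
      · rw [hσ0, abs_of_pos hkpos, div_self hkpos.ne']
        simp
      · have hneg : μ (σ i) < 0 := by
          apply hkneg
          rw [← hσ0]; exact fun h => hi (σ.injective h)
        rw [abs_of_neg hneg, div_neg, div_self hneg.ne]
        fin_cases i
        · exact absurd rfl hi
        · simp
        · simp
        · simp
    · have h' : σ j ≠ σ i := fun h => hne (σ.injective h).symm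
      rw [if_neg h', Matrix.diagonal_apply_ne _ hne]
  refine ⟨U * Q, ?_, ?_⟩
  · have hUunit : IsUnit U := by
      have := invertibleOfRightInverse U Uᵀ hU1
      exact isUnit_of_invertible U
    exact hUunit.mul hQunit
  · rw [Matrix.transpose_mul]
    calc Qᵀ * Uᵀ * G * (U * Q) = Qᵀ * (Uᵀ * G * U) * Q := by
          simp only [Matrix.mul_assoc]
      _ = Qᵀ * Matrix.diagonal μ * Q := by rw [hUdiag]
      _ = Matrix.diagonal ![1, -1, -1, -1] := hQDQ
lemma det_fin_four' (A : Matrix (Fin 4) (Fin 4) ℝ) :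
    det A = A 0 0 * (det (A.submatrix Fin.succ (Fin.succAbove 0)))
      - A 0 1 * (det (A.submatrix Fin.succ (Fin.succAbove 1)))
      + A 0 2 * (det (A.submatrix Fin.succ (Fin.succAbove 2)))
      - A 0 3 * (det (A.submatrix Fin.succ (Fin.succAbove 3))) := by
  rw [det_succ_row_zero, Fin.sum_univ_four]
  have h3 : ((3 : Fin 4) : ℕ) = 3 := rfl
  rw [h3]
  norm_num
  ring

lemma det_emission (G : Matrix (Fin 4) (Fin 4) ℝ) (hsymm : G.IsSymm) (hdiag : ∀ i, G i i = 0) :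
    G.det = (G 0 1 * G 2 3)^2 + (G 0 2 * G 1 3)^2 + (G 0 3 * G 1 2)^2
      - 2*(G 0 1 * G 2 3 * (G 0 2 * G 1 3) + G 0 1 * G 2 3 * (G 0 3 * G 1 2)
          + G 0 2 * G 1 3 * (G 0 3 * G 1 2)) := by
  have h10 := hsymm.apply 0 1
  have h20 := hsymm.apply 0 2
  have h30 := hsymm.apply 0 3
  have h21 := hsymm.apply 1 2
  have h31 := hsymm.apply 1 3
  have h32 := hsymm.apply 2 3
  rw [det_fin_four']
  simp only [det_fin_three, submatrix_apply]
  norm_num [Fin.succAbove, Fin.lt_def, show (Fin.succ 0 : Fin 4) = 1 from rfl,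
    show (Fin.succ 1 : Fin 4) = 2 from rfl, show (Fin.succ 2 : Fin 4) = 3 from rfl,
    show (Fin.castSucc 2 : Fin 4) = 2 from rfl, show ((3:Fin 4):ℕ) = 3 from rfl,
    show ((2:Fin 4):ℕ) = 2 from rfl, show ((1:Fin 4):ℕ) = 1 from rfl,
    show ((0:Fin 4):ℕ) = 0 from rfl, show (Fin.castSucc 1 : Fin 4) = 1 from rfl,
    show (Fin.castSucc 0 : Fin 4) = 0 from rfl]
  rw [h10, h20, h30, h21, h31, h32]
  simp only [hdiag]
  ring

/-- A real symmetric 4×4 matrix `G` in emission form is congruent to the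
Lorentzian metric `diag(1,−1,−1,−1)` (via an invertible matrix `P`, `Pᵀ G P = diag(1,−1,−1,−1)`)
iff `A = √(G₂₃G₁₄)`, `B = √(G₁₃G₂₄)`, `C = √(G₁₂G₃₄)` satisfy the strict triangle
inequalities. -/
theorem stmt_2 (G : Matrix (Fin 4) (Fin 4) ℝ)
    (hsymm : G.IsSymm) (hdiag : ∀ i, G i i = 0)
    (hpos : ∀ i j, i ≠ j → 0 < G i j) :
    (∃ P : Matrix (Fin 4) (Fin 4) ℝ, IsUnit P ∧
        P.transpose * G * P = Matrix.diagonal ![1, -1, -1, -1]) ↔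
      Real.sqrt (G 1 2 * G 0 3) < Real.sqrt (G 0 2 * G 1 3) + Real.sqrt (G 0 1 * G 2 3)
      ∧ Real.sqrt (G 0 2 * G 1 3) < Real.sqrt (G 1 2 * G 0 3) + Real.sqrt (G 0 1 * G 2 3)
      ∧ Real.sqrt (G 0 1 * G 2 3) < Real.sqrt (G 1 2 * G 0 3) + Real.sqrt (G 0 2 * G 1 3) := by
  set A := Real.sqrt (G 1 2 * G 0 3) with hA
  set B := Real.sqrt (G 0 2 * G 1 3) with hB
  set C := Real.sqrt (G 0 1 * G 2 3) with hC
  have hA2 : A ^ 2 = G 1 2 * G 0 3 :=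
    Real.sq_sqrt (mul_pos (hpos 1 2 (by decide)) (hpos 0 3 (by decide))).le
  have hB2 : B ^ 2 = G 0 2 * G 1 3 :=
    Real.sq_sqrt (mul_pos (hpos 0 2 (by decide)) (hpos 1 3 (by decide))).le
  have hC2 : C ^ 2 = G 0 1 * G 2 3 :=
    Real.sq_sqrt (mul_pos (hpos 0 1 (by decide)) (hpos 2 3 (by decide))).le
  have hApos : 0 < A := Real.sqrt_pos.mpr (mul_pos (hpos 1 2 (by decide)) (hpos 0 3 (by decide)))
  have hBpos : 0 < B := Real.sqrt_pos.mpr (mul_pos (hpos 0 2 (by decide)) (hpos 1 3 (by decide)))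
  have hCpos : 0 < C := Real.sqrt_pos.mpr (mul_pos (hpos 0 1 (by decide)) (hpos 2 3 (by decide)))
  have hdetABC : G.det = -((A + B + C) * ((-A + B + C) * ((A - B + C) * (A + B - C)))) := by
    have h1 : G.det = (A^2)^2 + (B^2)^2 + (C^2)^2
        - 2*(C^2 * B^2 + C^2 * A^2 + B^2 * A^2) := by
      rw [det_emission G hsymm hdiag, hA2, hB2, hC2]
      ring
    rw [h1]; ring
  have hdet_iff : (A < B + C ∧ B < A + C ∧ C < A + B) ↔ G.det < 0 := by
    constructor
    · rintro ⟨h1, h2, h3⟩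
      rw [hdetABC]
      have : 0 < (A + B + C) * ((-A + B + C) * ((A - B + C) * (A + B - C))) := by
        apply mul_pos (by linarith)
        apply mul_pos (by linarith)
        exact mul_pos (by linarith) (by linarith)
      linarith
    · intro hd
      rw [hdetABC] at hd
      have hS : 0 < A + B + C := by linarith
      have hT : 0 < (-A + B + C) * ((A - B + C) * (A + B - C)) := by
        by_contra h
        push_neg at h
        nlinarith
      obtain ⟨p1, p2, p3⟩ := tri_of_prod (x := -A + B + C) (y := A - B + C) (z := A + B - C)
        (by linarith) (by linarith) (by linarith) hT
      exact ⟨by linarith, by linarith, by linarith⟩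
  constructor
  · rintro ⟨P, hP, hPGP⟩
    apply hdet_iff.mpr
    have hPd : P.det ≠ 0 := (Matrix.isUnit_iff_isUnit_det P).mp hP |>.ne_zero
    have hdeq := congrArg Matrix.det hPGP
    rw [Matrix.det_mul, Matrix.det_mul, Matrix.det_transpose, Matrix.det_diagonal,
      Fin.prod_univ_four] at hdeq
    have hval : (![1, -1, -1, -1] : Fin 4 → ℝ) 0 * ![1, -1, -1, -1] 1 * ![1, -1, -1, -1] 2
        * ![1, -1, -1, -1] 3 = -1 := by show (1:ℝ) * -1 * -1 * -1 = -1; norm_num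
    rw [hval] at hdeq
    have hP2 : 0 < P.det ^ 2 := by positivity
    by_contra h
    push_neg at h
    nlinarith
  · intro h
    exact emission_exists_P G hsymm hdiag hpos (hdet_iff.mp h)
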